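/- arXiv:2605.30643 — 3 statements merged into one kernel-verified Lean document; each statement's English description precedes it below -/
import Mathlib

section
/- Let f(δ) = 1/(1 + exp(α + βδ)) with β > 0 and Λ(δ) = λ f(δ) with λ > 0. For each p ∈ ℝ, the maximizer of δ ↦ Λ(δ)(δ - p) is δ*(p) = p + (1 + x(p))/β, where x(p) = W₀(exp(-α - βp - 1)) and W₀ is the principal branch of the Lambert W function. -/
/-- Closed-form quote for the logistic fill curve: with `Λ(δ) = λ/(1 + exp(α + βδ))`,
the maximizer of `δ ↦ Λ(δ)(δ - p)` is `δ*(p) = p + (1 + x(p))/β`, where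
`x(p) = W₀(exp(-α - βp - 1))` and `W₀` is the principal Lambert W branch
(characterized by `W₀(y) e^{W₀(y)} = y`, `W₀(y) ≥ 0` for `y ≥ 0`).  The maximizer
satisfies the first-order condition and achieves the supremum. -/
theorem logistic_optimal_quote (α β lam : ℝ) (hβ : 0 < β) (hlam : 0 < lam)
    (W0 : ℝ → ℝ)
    (hW0 : ∀ y, 0 ≤ y → W0 y * Real.exp (W0 y) = y ∧ 0 ≤ W0 y)
    (p : ℝ) :
    let Λ : ℝ → ℝ := fun δ => lam / (1 + Real.exp (α + β * δ))
    let x : ℝ := W0 (Real.exp (-α - β * p - 1))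
    let δs : ℝ := p + (1 + x) / β
    (∀ δ, Λ δ * (δ - p) ≤ Λ δs * (δs - p)) ∧
      deriv Λ δs * (δs - p) + Λ δs = 0 := by
  intro Λ x δs
  obtain ⟨hxe, hx0⟩ := hW0 (Real.exp (-α - β * p - 1)) (Real.exp_pos _).le
  have hxe' : x * Real.exp x = Real.exp (-α - β * p - 1) := hxe
  have hx0' : (0:ℝ) ≤ x := hx0
  have hxpos : 0 < x := by
    rcases hx0'.lt_or_eq with h | h
    · exact h
    · exfalso
      rw [← h, zero_mul] at hxe'
      exact absurd hxe'.symm (Real.exp_pos _).ne'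
  set E : ℝ := Real.exp (α + β * p + 1 + x) with hE
  have hEpos : 0 < E := Real.exp_pos _
  have hxE : x * E = 1 := by
    have : x * E = (x * Real.exp x) * Real.exp (α + β * p + 1) := by
      rw [hE, mul_assoc, ← Real.exp_add]; ring_nf
    rw [this, hxe', ← Real.exp_add]; ring_nf; exact Real.exp_zero
  have hds : δs - p = (1 + x) / β := by simp [δs]
  have hexpds : Real.exp (α + β * δs) = E := by
    rw [hE]; congr 1
    have : β * ((1 + x) / β) = 1 + x := by field_simp
    simp only [δs]; rw [mul_add, this]; ring
  have hden : (0:ℝ) < 1 + E := by linarith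
  have hΛds : Λ δs = lam / (1 + E) := by simp only [Λ, hexpds]
  have hval : Λ δs * (δs - p) = lam * x / β := by
    rw [hΛds, hds]
    have h1x : 1 + E = (1 + x) / x := by
      field_simp; linarith [hxE]
    rw [h1x]
    field_simp
  constructor
  · intro δ
    rw [hval]
    set A : ℝ := Real.exp (α + β * δ) with hA
    have hApos : 0 < A := Real.exp_pos _
    have hdenA : (0:ℝ) < 1 + A := by linarith
    have hxA : x * A = Real.exp (β * (δ - p) - 1 - x) := by
      have : A = E * Real.exp (β * (δ - p) - 1 - x) := by
        rw [hA, hE, ← Real.exp_add]; ring_nf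
      rw [this, ← mul_assoc, hxE, one_mul]
    have key : β * (δ - p) ≤ x * (1 + A) := by
      have h1 : (β * (δ - p) - 1 - x) + 1 ≤ Real.exp (β * (δ - p) - 1 - x) :=
        Real.add_one_le_exp _
      nlinarith [hxA]
    show lam / (1 + A) * (δ - p) ≤ lam * x / β
    rw [div_mul_eq_mul_div, div_le_div_iff₀ hdenA hβ]
    calc lam * (δ - p) * β = lam * (β * (δ - p)) := by ring
      _ ≤ lam * (x * (1 + A)) := by nlinarith
      _ = lam * x * (1 + A) := by ring
  · have hinner : HasDerivAt (fun δ : ℝ => α + β * δ) β δs := by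
      simpa using ((hasDerivAt_id δs).const_mul β).const_add α
    have hexp : HasDerivAt (fun δ : ℝ => 1 + Real.exp (α + β * δ))
        (Real.exp (α + β * δs) * β) δs := (hinner.exp).const_add 1
    have hne : 1 + Real.exp (α + β * δs) ≠ 0 := by rw [hexpds]; linarith
    have hd : HasDerivAt Λ
        ((0 * (1 + Real.exp (α + β * δs)) - lam * (Real.exp (α + β * δs) * β)) /
          (1 + Real.exp (α + β * δs)) ^ 2) δs :=
      (hasDerivAt_const δs lam).div hexp hne
    rw [hd.deriv, hexpds, hΛds, hds]
    have hβne : β ≠ 0 := hβ.ne'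
    have hdenne : (1 : ℝ) + E ≠ 0 := hden.ne'
    field_simp
    linear_combination (-(lam * β)) * hxE
end

section
/- With the logistic fill curve Λ(δ) = λ/(1 + exp(α + βδ)), β, λ > 0, define x(p) = W₀(exp(-α - βp - 1)). Then the Hamiltonian H(p) = sup_δ Λ(δ)(δ - p) satisfies H(p) = (λ/β) x(p), H'(p) = -λ x(p)/(1 + x(p)), and H''(p) = λβ x(p)/(1 + x(p))³; in particular H'' > 0 everywhere. -/
private lemma texp_lt {a b : ℝ} (ha : 0 ≤ a) (hab : a < b) :
    a * Real.exp a < b * Real.exp b :=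
  mul_lt_mul'' hab (Real.exp_lt_exp.mpr hab) ha (Real.exp_pos a).le

private lemma W0_pos {W0 : ℝ → ℝ}
    (hW0 : ∀ y, 0 ≤ y → W0 y * Real.exp (W0 y) = y ∧ 0 ≤ W0 y)
    {y : ℝ} (hy : 0 < y) : 0 < W0 y := by
  obtain ⟨he, hn⟩ := hW0 y hy.le
  rcases hn.lt_or_eq with h | h
  · exact h
  · exfalso; rw [← h] at he; simp at he; linarith

private lemma W0_contAt {W0 : ℝ → ℝ}
    (hW0 : ∀ y, 0 ≤ y → W0 y * Real.exp (W0 y) = y ∧ 0 ≤ W0 y)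
    {y0 : ℝ} (hy0 : 0 < y0) : ContinuousAt W0 y0 := by
  have hw0 : 0 < W0 y0 := W0_pos hW0 hy0
  rw [Metric.continuousAt_iff]
  intro ε hε
  obtain ⟨hfeq0, _⟩ := hW0 y0 hy0.le
  set w0 := W0 y0 with hw0def
  set ε' := min ε w0 with hε'def
  have hε'0 : 0 < ε' := lt_min hε hw0
  have hεε : ε' ≤ ε := min_le_left _ _
  have hsub : (0:ℝ) ≤ w0 - ε' := by
    have := min_le_right ε w0; linarith
  set A := (w0 - ε') * Real.exp (w0 - ε') with hA
  set B := (w0 + ε') * Real.exp (w0 + ε') with hB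
  have hlt1 : A < y0 := by
    have := texp_lt hsub (show w0 - ε' < w0 by linarith)
    rw [hfeq0] at this; exact this
  have hlt2 : y0 < B := by
    have := texp_lt hw0.le (show w0 < w0 + ε' by linarith)
    rw [hfeq0] at this; exact this
  refine ⟨min (y0 - A) (B - y0), lt_min (by linarith) (by linarith), ?_⟩
  intro y hy
  rw [Real.dist_eq] at hy ⊢
  obtain ⟨hd1, hd2⟩ := abs_lt.mp hy
  have h1 := min_le_left (y0 - A) (B - y0)
  have h2 := min_le_right (y0 - A) (B - y0)
  have hy1 : A < y := by linarith
  have hy2 : y < B := by linarith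
  have hApos : 0 ≤ A := by rw [hA]; positivity
  obtain ⟨hey, hny⟩ := hW0 y (by linarith)
  have key1 : w0 - ε' < W0 y := by
    by_contra h
    push_neg at h
    rcases eq_or_lt_of_le h with h' | h'
    · rw [← h', hey] at hA; linarith
    · have := texp_lt hny h'
      rw [hey, ← hA] at this; linarith
  have key2 : W0 y < w0 + ε' := by
    by_contra h
    push_neg at h
    rcases eq_or_lt_of_le h with h' | h'
    · rw [h', hey] at hB; linarith
    · have := texp_lt (by linarith : (0:ℝ) ≤ w0 + ε') h'
      rw [hey, ← hB] at this; linarith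
  rw [abs_lt]
  constructor <;> linarith

private lemma W0_hasDerivAt (α β : ℝ) (W0 : ℝ → ℝ)
    (hW0 : ∀ y, 0 ≤ y → W0 y * Real.exp (W0 y) = y ∧ 0 ≤ W0 y)
    (p : ℝ) :
    HasDerivAt (fun q => W0 (Real.exp (-α - β * q - 1)))
      (-β * W0 (Real.exp (-α - β * p - 1)) / (1 + W0 (Real.exp (-α - β * p - 1)))) p := by
  set E : ℝ → ℝ := fun q => Real.exp (-α - β * q - 1) with hE
  have hEpos : 0 < E p := Real.exp_pos _
  set w := W0 (E p) with hw
  have hwpos : 0 < w := W0_pos hW0 hEpos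
  have hwe : w * Real.exp w = E p := (hW0 (E p) hEpos.le).1
  have hinner : HasDerivAt (fun q : ℝ => -α - β * q - 1) (-β) p := by
    have h1 : HasDerivAt (fun q : ℝ => β * q) β p := by
      simpa using (hasDerivAt_id p).const_mul β
    have h2 := ((hasDerivAt_const p (-α)).sub h1).sub_const 1
    simpa using h2
  have hEd : HasDerivAt E (E p * (-β)) p := hinner.exp
  have hf : HasDerivAt (fun t : ℝ => t * Real.exp t) ((1 + w) * Real.exp w) w := by
    have := (hasDerivAt_id w).mul (Real.hasDerivAt_exp w)
    exact this.congr_deriv (by simp only [id, one_mul]; ring)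
  have hne : (1 + w) * Real.exp w ≠ 0 := by positivity
  have hev : ∀ᶠ y in nhds (E p), (fun t : ℝ => t * Real.exp t) (W0 y) = y := by
    filter_upwards [IsOpen.mem_nhds isOpen_Ioi hEpos] with y hy
    exact (hW0 y (le_of_lt hy)).1
  have hWd : HasDerivAt W0 (((1 + w) * Real.exp w)⁻¹) (E p) :=
    HasDerivAt.of_local_left_inverse (W0_contAt hW0 hEpos) hf hne hev
  have hcomp := hWd.comp p hEd
  refine hcomp.congr_deriv ?_
  rw [← hwe]
  have h1 : (1:ℝ) + w ≠ 0 := by positivity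
  field_simp

private lemma logistic_sup (α β lam : ℝ) (hβ : 0 < β) (hlam : 0 < lam)
    (p w : ℝ) (hw : 0 < w) (hwe : w * Real.exp w = Real.exp (-α - β * p - 1)) :
    (⨆ δ : ℝ, lam / (1 + Real.exp (α + β * δ)) * (δ - p)) = (lam / β) * w := by
  have hid : w * Real.exp (α + β * p + 1 + w) = 1 := by
    have h1 : Real.exp (α + β * p + 1 + w) = Real.exp w * Real.exp (α + β * p + 1) := by
      rw [← Real.exp_add]; ring_nf
    rw [h1, ← mul_assoc, hwe, ← Real.exp_add,
      show -α - β * p - 1 + (α + β * p + 1) = 0 by ring, Real.exp_zero]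
  have key : ∀ δ : ℝ, lam / (1 + Real.exp (α + β * δ)) * (δ - p) ≤ (lam / β) * w := by
    intro δ
    set t := β * (δ - p) - 1 - w with ht
    have hexpt : w * Real.exp (α + β * δ) = Real.exp t := by
      have : Real.exp (α + β * δ) = Real.exp (α + β * p + 1 + w) * Real.exp t := by
        rw [← Real.exp_add, ht]; congr 1; ring
      rw [this, ← mul_assoc, hid, one_mul]
    have hEpos : 0 < Real.exp (α + β * δ) := Real.exp_pos _
    have h1E : 0 < 1 + Real.exp (α + β * δ) := by linarith
    rw [div_mul_eq_mul_div, div_mul_eq_mul_div, div_le_div_iff₀ h1E hβ]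
    have hle : t + 1 ≤ Real.exp t := Real.add_one_le_exp t
    have hle2 : β * (δ - p) - w ≤ w * Real.exp (α + β * δ) := by
      rw [hexpt]; linarith
    nlinarith [hle2, hlam.le]
  have hne : (1:ℝ) + w ≠ 0 := by positivity
  have hattain : lam / (1 + Real.exp (α + β * (p + (1 + w) / β))) * ((p + (1 + w) / β) - p)
      = (lam / β) * w := by
    have harg : α + β * (p + (1 + w) / β) = α + β * p + 1 + w := by field_simp; ring
    have hexp : Real.exp (α + β * (p + (1 + w) / β)) = 1 / w := by
      rw [harg]
      field_simp
      nlinarith [hid]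
    rw [hexp, show (p + (1 + w) / β) - p = (1 + w) / β by ring, one_add_div hw.ne']
    rw [div_div_eq_mul_div]
    field_simp
    ring
  refine le_antisymm (ciSup_le key) ?_
  calc (lam / β) * w
      = lam / (1 + Real.exp (α + β * (p + (1 + w) / β))) * ((p + (1 + w) / β) - p) :=
        hattain.symm
    _ ≤ ⨆ δ : ℝ, lam / (1 + Real.exp (α + β * δ)) * (δ - p) := by
        apply le_ciSup (f := fun δ : ℝ => lam / (1 + Real.exp (α + β * δ)) * (δ - p))
        exact ⟨(lam / β) * w, fun y ⟨δ, hδ⟩ => hδ ▸ key δ⟩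

/-- Hamiltonian derivatives for the logistic fill curve: with
`Λ(δ) = λ/(1 + exp(α + βδ))` and `x(p) = W₀(exp(-α - βp - 1))`, the Hamiltonian
`H(p) = sup_δ Λ(δ)(δ - p)` satisfies `H(p) = (λ/β) x(p)`,
`H'(p) = -λ x(p)/(1 + x(p))`, `H''(p) = λβ x(p)/(1 + x(p))³`, and `H'' > 0`. -/
theorem logistic_hamiltonian_derivs (α β lam : ℝ) (hβ : 0 < β) (hlam : 0 < lam)
    (W0 : ℝ → ℝ)
    (hW0 : ∀ y, 0 ≤ y → W0 y * Real.exp (W0 y) = y ∧ 0 ≤ W0 y) :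
    let Λ : ℝ → ℝ := fun δ => lam / (1 + Real.exp (α + β * δ))
    let x : ℝ → ℝ := fun p => W0 (Real.exp (-α - β * p - 1))
    let H : ℝ → ℝ := fun p => ⨆ δ : ℝ, Λ δ * (δ - p)
    ∀ p : ℝ,
      H p = (lam / β) * x p ∧
      deriv H p = -lam * x p / (1 + x p) ∧
      deriv (deriv H) p = lam * β * x p / (1 + x p) ^ 3 ∧
      0 < deriv (deriv H) p := by
  intro Λ x H p
  have hxpos : ∀ q : ℝ, 0 < x q := fun q => W0_pos hW0 (Real.exp_pos _)
  have hxeq : ∀ q : ℝ, x q * Real.exp (x q) = Real.exp (-α - β * q - 1) :=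
    fun q => (hW0 _ (Real.exp_pos _).le).1
  have hHeq : ∀ q : ℝ, H q = (lam / β) * x q := fun q =>
    logistic_sup α β lam hβ hlam q (x q) (hxpos q) (hxeq q)
  have hxd : ∀ q : ℝ, HasDerivAt x (-β * x q / (1 + x q)) q :=
    fun q => W0_hasDerivAt α β W0 hW0 q
  -- first derivative of H
  have hHfun : H = fun q => (lam / β) * x q := funext hHeq
  have hHd : ∀ q : ℝ, deriv H q = -lam * x q / (1 + x q) := by
    intro q
    have h1 : HasDerivAt (fun r => (lam / β) * x r) ((lam / β) * (-β * x q / (1 + x q))) q :=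
      (hxd q).const_mul (lam / β)
    rw [hHfun, h1.deriv]
    have hq1 : (1:ℝ) + x q ≠ 0 := by have := hxpos q; positivity
    field_simp
  -- second derivative
  have hH2 : deriv (deriv H) p = lam * β * x p / (1 + x p) ^ 3 := by
    have hHdfun : deriv H = fun q => -lam * x q / (1 + x q) := funext hHd
    rw [hHdfun]
    have hq1 : ∀ q : ℝ, (1:ℝ) + x q ≠ 0 := fun q => by have := hxpos q; positivity
    have hnum : HasDerivAt (fun q => -lam * x q) (-lam * (-β * x p / (1 + x p))) p :=
      (hxd p).const_mul (-lam)
    have hden : HasDerivAt (fun q => 1 + x q) (-β * x p / (1 + x p)) p :=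
      (hxd p).const_add 1
    have hquot := hnum.div hden (hq1 p)
    rw [show deriv (fun q => -lam * x q / (1 + x q)) p = _ from hquot.deriv]
    have hxp := hxpos p
    have h1p : (0:ℝ) < 1 + x p := by linarith
    field_simp
    ring
  refine ⟨hHeq p, hHd p, hH2, ?_⟩
  rw [hH2]
  have := hxpos p
  positivity
end

section
/- Let Λ(δ) = λ/(1 + exp(α + βδ)) with λ, β > 0. For each p, the map δ ↦ Λ(δ)(δ - p) attains its supremum on ℝ at a unique point, and the supremum H(p) is finite and strictly positive. -/
open Real Set

/-- For the logistic fill intensity `Λ(δ) = λ/(1 + exp(α + βδ))` with `λ, β > 0`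
and any `p`, the map `δ ↦ Λ(δ)(δ - p)` attains its supremum on `ℝ` at a unique
point, and the attained supremum is strictly positive (in particular finite). -/
theorem logistic_objective_unique_max (α β lam p : ℝ) (hβ : 0 < β) (hlam : 0 < lam) :
    let Λ : ℝ → ℝ := fun δ => lam / (1 + Real.exp (α + β * δ))
    ∃ δs : ℝ,
      (∀ δ, Λ δ * (δ - p) ≤ Λ δs * (δs - p)) ∧
      (∀ δ', (∀ δ, Λ δ * (δ - p) ≤ Λ δ' * (δ' - p)) → δ' = δs) ∧
      0 < Λ δs * (δs - p) := by
  intro Λ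
  set E : ℝ → ℝ := fun δ => Real.exp (α + β * δ) with hEdef
  set D : ℝ → ℝ := fun δ => 1 + E δ with hDdef
  have hEpos : ∀ δ, 0 < E δ := fun δ => Real.exp_pos _
  have hDpos : ∀ δ, 0 < D δ := fun δ => by have := hEpos δ; simp only [hDdef]; linarith
  set φ : ℝ → ℝ := fun δ => 1 + E δ - β * (δ - p) * E δ with hφdef
  set F : ℝ → ℝ := fun δ => Λ δ * (δ - p) with hFdef
  -- derivative of E
  have hEderiv : ∀ δ, HasDerivAt E (β * E δ) δ := by
    intro δ
    have h1 : HasDerivAt (fun x : ℝ => α + β * x) β δ := by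
      simpa using ((hasDerivAt_id δ).const_mul β).const_add α
    simpa [hEdef, mul_comm] using h1.exp
  -- derivative of φ
  have hφderiv : ∀ δ, HasDerivAt φ (-(β ^ 2 * (δ - p) * E δ)) δ := by
    intro δ
    have h2 : HasDerivAt (fun x : ℝ => β * (x - p)) β δ := by
      simpa using ((hasDerivAt_id δ).sub_const p).const_mul β
    have h1 : HasDerivAt (fun x => β * (x - p) * E x)
        (β * E δ + β * (δ - p) * (β * E δ)) δ := h2.mul (hEderiv δ)
    have h3 := ((hEderiv δ).const_add 1).sub h1
    refine h3.congr_deriv ?_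
    ring
  -- derivative of F
  have hFderiv : ∀ δ, HasDerivAt F (lam * φ δ / (D δ) ^ 2) δ := by
    intro δ
    have hu : HasDerivAt (fun x : ℝ => lam * (x - p)) lam δ := by
      simpa using ((hasDerivAt_id δ).sub_const p).const_mul lam
    have hv : HasDerivAt D (β * E δ) δ := (hEderiv δ).const_add 1
    have hdiv := hu.div hv (hDpos δ).ne'
    have heq : F = fun x => lam * (x - p) / D x := by
      funext x
      simp only [hFdef, hDdef, Λ, hEdef]
      ring
    rw [heq]
    refine hdiv.congr_deriv ?_
    have : D δ ≠ 0 := (hDpos δ).ne'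
    simp only [hφdef, hDdef]
    ring
  have hφcont : Continuous φ := by fun_prop
  have hFcont : Continuous F := by
    have : Continuous Λ := by
      apply continuous_const.div (by fun_prop)
      intro x
      exact (hDpos x).ne'
    exact this.mul (by fun_prop)
  -- φ strictly decreasing on [p, ∞)
  have hφanti : StrictAntiOn φ (Ici p) := by
    apply strictAntiOn_of_deriv_neg (convex_Ici p) hφcont.continuousOn
    intro x hx
    rw [interior_Ici] at hx
    rw [(hφderiv x).deriv]
    have h1 : 0 < β ^ 2 * (x - p) * E x :=
      mul_pos (mul_pos (pow_pos hβ 2) (sub_pos.mpr hx)) (hEpos x)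
    linarith
  -- φ positive at p, negative far right
  have hφp : 0 < φ p := by
    simp only [hφdef]
    nlinarith [hEpos p]
  set b : ℝ := max (p + 2 / β) ((1 - α) / β) with hbdef
  have hpb : p < b := by
    have h : 0 < 2 / β := div_pos (by norm_num) hβ
    calc p < p + 2 / β := by linarith
      _ ≤ b := le_max_left _ _
  have hφb : φ b < 0 := by
    have h1 : 2 ≤ β * (b - p) := by
      have : p + 2 / β ≤ b := le_max_left _ _
      have h2 : 2 / β ≤ b - p := by linarith
      calc (2:ℝ) = β * (2 / β) := by field_simp
        _ ≤ β * (b - p) := by nlinarith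
    have h2 : 1 ≤ α + β * b := by
      have : (1 - α) / β ≤ b := le_max_right _ _
      have h3 : 1 - α ≤ β * b := by
        calc 1 - α = β * ((1 - α) / β) := by field_simp
          _ ≤ β * b := by nlinarith
      linarith
    have h3 : 1 < E b := by
      have : Real.exp 1 ≤ E b := Real.exp_le_exp.mpr h2
      have h4 : (1:ℝ) < Real.exp 1 := by
        have := Real.add_one_le_exp 1
        linarith
      linarith
    have h4 : 2 * E b ≤ β * (b - p) * E b := by nlinarith [hEpos b]
    simp only [hφdef]
    nlinarith
  -- unique zero δs of φ in (p, b)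
  obtain ⟨δs, hδs_mem, hδs_zero⟩ : ∃ δs ∈ Ioo p b, φ δs = 0 := by
    have h := intermediate_value_Ioo' (le_of_lt hpb) hφcont.continuousOn
    have h0 : (0:ℝ) ∈ Ioo (φ b) (φ p) := ⟨hφb, hφp⟩
    obtain ⟨x, hx, hfx⟩ := h h0
    exact ⟨x, hx, hfx⟩
  have hpδs : p < δs := hδs_mem.1
  -- sign of φ
  have hφpos : ∀ δ, δ < δs → 0 < φ δ := by
    intro δ hδ
    rcases le_or_gt δ p with h | h
    · simp only [hφdef]
      have h1 : β * (δ - p) * E δ ≤ 0 :=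
        mul_nonpos_of_nonpos_of_nonneg
          (mul_nonpos_of_nonneg_of_nonpos hβ.le (by linarith)) (hEpos δ).le
      nlinarith [hEpos δ]
    · have := hφanti (le_of_lt h) (le_of_lt hpδs) hδ
      rw [hδs_zero] at this
      exact this
  have hφneg : ∀ δ, δs < δ → φ δ < 0 := by
    intro δ hδ
    have := hφanti (le_of_lt hpδs) (le_of_lt (lt_trans hpδs hδ)) hδ
    rw [hδs_zero] at this
    exact this
  -- F strictly mono on Iic δs, strictly anti on Ici δs
  have hmono : StrictMonoOn F (Iic δs) := by
    apply strictMonoOn_of_deriv_pos (convex_Iic δs) hFcont.continuousOn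
    intro x hx
    rw [interior_Iic] at hx
    rw [(hFderiv x).deriv]
    exact div_pos (mul_pos hlam (hφpos x hx)) (pow_pos (hDpos x) 2)
  have hanti : StrictAntiOn F (Ici δs) := by
    apply strictAntiOn_of_deriv_neg (convex_Ici δs) hFcont.continuousOn
    intro x hx
    rw [interior_Ici] at hx
    rw [(hFderiv x).deriv]
    exact div_neg_of_neg_of_pos (mul_neg_of_pos_of_neg hlam (hφneg x hx)) (pow_pos (hDpos x) 2)
  have hlt : ∀ δ, δ ≠ δs → F δ < F δs := by
    intro δ hne
    rcases lt_or_gt_of_ne hne with h | h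
    · exact hmono (le_of_lt h) (le_refl δs) h
    · exact hanti (le_refl δs) (le_of_lt h) h
  refine ⟨δs, ?_, ?_, ?_⟩
  · intro δ
    rcases eq_or_ne δ δs with rfl | hne
    · exact le_refl _
    · exact (hlt δ hne).le
  · intro δ' hmax
    by_contra hne
    have h1 := hlt δ' hne
    have h2 := hmax δs
    exact absurd h2 (not_le.mpr h1)
  · have hFp : F p = 0 := by simp [hFdef]
    have := hlt p (ne_of_lt hpδs)
    rw [hFp] at this
    exact this
end
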